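/- No mixing on bad news in extremal equilibria of a binary experiment: let E = ({l,h}, p_L, p_H) be a binary experiment. If σ̂ is the most selective equilibrium strategy, then σ̂(l) ∈ {0,1}; and if σ̌ is the least selective equilibrium strategy, then σ̌(l) ∈ {0,1}. -/

import Mathlib

open Finset Filter Topology

noncomputable section

set_option maxHeartbeats 1000000

/-- Probability that a single buyer rejects the seller, given conditional signal
distribution `p` and strategy `σ`: `r_θ(σ) = 1 - Σ_s p_θ(s)·σ(s)`. -/
def rej {m : ℕ} (p σ : Fin m → ℝ) : ℝ := 1 - ∑ s, p s * σ s

/-- `ν_θ(σ) = (1/n)·Σ_{k=0}^{n-1} r_θ(σ)^k`: probability of being visited. -/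
def visit (n : ℕ) {m : ℕ} (p σ : Fin m → ℝ) : ℝ :=
  (1 / (n : ℝ)) * ∑ k ∈ Finset.range n, rej p σ ^ k

/-- Interim belief `Ψ(σ) = ρ·ν_H(σ) / (ρ·ν_H(σ) + (1-ρ)·ν_L(σ))`. -/
def interim (ρ : ℝ) (n : ℕ) {m : ℕ} (pL pH σ : Fin m → ℝ) : ℝ :=
  ρ * visit n pH σ / (ρ * visit n pH σ + (1 - ρ) * visit n pL σ)

/-- Posterior belief `Q_ψ(s) = ψ·p_H(s) / (ψ·p_H(s) + (1-ψ)·p_L(s))`. -/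
def post {m : ℕ} (ψ : ℝ) (pL pH : Fin m → ℝ) (s : Fin m) : ℝ :=
  ψ * pH s / (ψ * pH s + (1 - ψ) * pL s)

/-- A strategy maps each signal to an acceptance probability in `[0,1]`. -/
def IsStrategy {m : ℕ} (σ : Fin m → ℝ) : Prop := ∀ s, 0 ≤ σ s ∧ σ s ≤ 1

/-- `σ` is an equilibrium strategy: with `ψ* = Ψ(σ)`, accept for sure when the
posterior exceeds `c`, reject for sure when it falls below `c`. -/
def IsEquilibrium (ρ c : ℝ) (n : ℕ) {m : ℕ} (pL pH σ : Fin m → ℝ) : Prop :=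
  IsStrategy σ ∧
  ∀ s : Fin m,
    (c < post (interim ρ n pL pH σ) pL pH s → σ s = 1) ∧
    (post (interim ρ n pL pH σ) pL pH s < c → σ s = 0)

/-- Total surplus `Π(σ) = (1-c)·ρ·(1-r_H(σ)^n) - c·(1-ρ)·(1-r_L(σ)^n)`. -/
def surplus (ρ c : ℝ) (n : ℕ) {m : ℕ} (pL pH σ : Fin m → ℝ) : ℝ :=
  (1 - c) * ρ * (1 - rej pH σ ^ n) - c * (1 - ρ) * (1 - rej pL σ ^ n)

/-- The most selective equilibrium strategy. -/
def MostSelective (ρ c : ℝ) (n : ℕ) {m : ℕ} (pL pH σ : Fin m → ℝ) : Prop :=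
  IsEquilibrium ρ c n pL pH σ ∧
  ∀ σ' : Fin m → ℝ, IsEquilibrium ρ c n pL pH σ' → ∀ s, σ s ≤ σ' s

/-- The least selective equilibrium strategy. -/
def LeastSelective (ρ c : ℝ) (n : ℕ) {m : ℕ} (pL pH σ : Fin m → ℝ) : Prop :=
  IsEquilibrium ρ c n pL pH σ ∧
  ∀ σ' : Fin m → ℝ, IsEquilibrium ρ c n pL pH σ' → ∀ s, σ' s ≤ σ s

/-- An experiment: `p_L, p_H` are probability mass functions with full joint support,
indexed so that likelihood ratios are nondecreasing. -/
def IsExperiment {m : ℕ} (pL pH : Fin m → ℝ) : Prop :=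
  (∀ s, 0 ≤ pL s) ∧ (∀ s, 0 ≤ pH s) ∧
  (∑ s, pL s = 1) ∧ (∑ s, pH s = 1) ∧
  (∀ s, 0 < pL s + pH s) ∧
  (∀ i j : Fin m, i ≤ j → pH i * pL j ≤ pH j * pL i)

/-- A strategy is monotone: a positive acceptance probability at `s_i` forces sure
acceptance at every signal with strictly higher likelihood ratio. -/
def MonotoneStrategy {m : ℕ} (pL pH σ : Fin m → ℝ) : Prop :=
  ∀ i j : Fin m, 0 < σ i → pH i * pL j < pH j * pL i → σ j = 1


private lemma pow_cross {a b : ℝ} (hb : 0 ≤ b) (hab : b ≤ a) {j k : ℕ} (h : j ≤ k) :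
    a ^ j * b ^ k ≤ a ^ k * b ^ j := by
  obtain ⟨d, rfl⟩ := Nat.exists_eq_add_of_le h
  have ha : 0 ≤ a := hb.trans hab
  rw [pow_add, pow_add]
  nlinarith [pow_le_pow_left₀ hb hab d, pow_nonneg ha j, pow_nonneg hb j, pow_nonneg hb d,
    mul_nonneg (mul_nonneg (pow_nonneg ha j) (pow_nonneg hb j))
      (sub_nonneg.mpr (pow_le_pow_left₀ hb hab d))]

private lemma cheb (n : ℕ) (a b u v : ℝ) (hb : 0 ≤ b) (hab : b ≤ a) (hu : 0 ≤ u) (huv : u ≤ v) :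
    (∑ k ∈ Finset.range n, (a * u) ^ k) * (∑ k ∈ Finset.range n, (b * v) ^ k) ≤
      (∑ k ∈ Finset.range n, (b * u) ^ k) * (∑ k ∈ Finset.range n, (a * v) ^ k) := by
  have key : 0 ≤ ∑ j ∈ Finset.range n, ∑ k ∈ Finset.range n,
      (a ^ k * b ^ j - a ^ j * b ^ k) * (u ^ j * v ^ k - u ^ k * v ^ j) := by
    refine Finset.sum_nonneg fun j _ => Finset.sum_nonneg fun k _ => ?_
    rcases le_total j k with h | h
    · nlinarith [pow_cross hb hab h, pow_cross hu huv h]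
    · nlinarith [pow_cross hb hab h, pow_cross hu huv h]
  have hswap : (∑ j ∈ Finset.range n, ∑ k ∈ Finset.range n,
        ((b * u) ^ j * (a * v) ^ k - (a * u) ^ j * (b * v) ^ k))
      = ∑ j ∈ Finset.range n, ∑ k ∈ Finset.range n,
        ((b * u) ^ k * (a * v) ^ j - (a * u) ^ k * (b * v) ^ j) := Finset.sum_comm
  have hDD : (∑ j ∈ Finset.range n, ∑ k ∈ Finset.range n,
        ((b * u) ^ j * (a * v) ^ k - (a * u) ^ j * (b * v) ^ k))
      + (∑ j ∈ Finset.range n, ∑ k ∈ Finset.range n,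
        ((b * u) ^ j * (a * v) ^ k - (a * u) ^ j * (b * v) ^ k))
      = ∑ j ∈ Finset.range n, ∑ k ∈ Finset.range n,
        (a ^ k * b ^ j - a ^ j * b ^ k) * (u ^ j * v ^ k - u ^ k * v ^ j) := by
    nth_rewrite 2 [hswap]
    rw [← Finset.sum_add_distrib]
    refine Finset.sum_congr rfl fun j _ => ?_
    rw [← Finset.sum_add_distrib]
    refine Finset.sum_congr rfl fun k _ => ?_
    ring
  have hfin : (∑ k ∈ Finset.range n, (b * u) ^ k) * (∑ k ∈ Finset.range n, (a * v) ^ k)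
      - (∑ k ∈ Finset.range n, (a * u) ^ k) * (∑ k ∈ Finset.range n, (b * v) ^ k)
      = ∑ j ∈ Finset.range n, ∑ k ∈ Finset.range n,
        ((b * u) ^ j * (a * v) ^ k - (a * u) ^ j * (b * v) ^ k) := by
    rw [Finset.sum_mul_sum, Finset.sum_mul_sum, ← Finset.sum_sub_distrib]
    exact Finset.sum_congr rfl fun j _ => (Finset.sum_sub_distrib _ _).symm
  linarith

private lemma sum_pow_pos (n : ℕ) (hn : 1 ≤ n) {x : ℝ} (hx : 0 ≤ x) :
    0 < ∑ k ∈ Finset.range n, x ^ k :=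
  Finset.sum_pos' (fun k _ => pow_nonneg hx k) ⟨0, Finset.mem_range.mpr hn, by norm_num⟩

private lemma sum_zero_pow (n : ℕ) (hn : 1 ≤ n) : ∑ k ∈ Finset.range n, (0:ℝ) ^ k = 1 := by
  rw [geom_sum_eq (by norm_num)]
  rw [zero_pow (by omega)]
  norm_num

private lemma frac_le_frac {N0 M0 N1 M1 : ℝ} (h0 : 0 < N0 + M0) (h1 : 0 < N1 + M1)
    (h : N0 * M1 ≤ N1 * M0) : N0 / (N0 + M0) ≤ N1 / (N1 + M1) := by
  rw [div_le_div_iff₀ h0 h1]; nlinarith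

private lemma frac_lt_frac {N0 M0 N1 M1 : ℝ} (h0 : 0 < N0 + M0) (h1 : 0 < N1 + M1)
    (h : N0 * M1 < N1 * M0) : N0 / (N0 + M0) < N1 / (N1 + M1) := by
  rw [div_lt_div_iff₀ h0 h1]; nlinarith

private lemma visit_pos {n : ℕ} (hn : 1 ≤ n) {m : ℕ} {p : Fin m → ℝ}
    (hp : ∀ s, 0 ≤ p s) (hps : ∑ s, p s = 1) {σ : Fin m → ℝ} (hσ : IsStrategy σ) :
    0 < visit n p σ := by
  have hr : 0 ≤ rej p σ := by
    have h1 : ∑ s, p s * σ s ≤ ∑ s, p s :=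
      Finset.sum_le_sum fun s _ => by nlinarith [hp s, (hσ s).1, (hσ s).2]
    unfold rej; rw [hps] at h1; linarith
  have h2 : 0 < ∑ k ∈ Finset.range n, rej p σ ^ k := sum_pow_pos n hn hr
  have hn' : (0:ℝ) < 1 / (n : ℝ) := by
    have : (0:ℝ) < (n:ℝ) := by exact_mod_cast hn
    positivity
  exact mul_pos hn' h2

private lemma aux_frac {A B x y : ℝ} (hA : 0 < A) (hB : 0 < B) (hx : 0 ≤ x) (hy : 0 ≤ y) :
    A / (A + B) * y / (A / (A + B) * y + (1 - A / (A + B)) * x) = A * y / (A * y + B * x) := by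
  have hAB : 0 < A + B := by linarith
  have h1 : 1 - A / (A + B) = B / (A + B) := by field_simp; ring
  rw [h1]
  have h2 : A / (A + B) * y + B / (A + B) * x = (A * y + B * x) / (A + B) := by ring
  rw [h2]
  rcases eq_or_lt_of_le (add_nonneg (mul_nonneg hA.le hy) (mul_nonneg hB.le hx)) with h | h
  · have h3 : A * y = 0 := by nlinarith [mul_nonneg hA.le hy, mul_nonneg hB.le hx]
    have hy0 : y = 0 := (mul_eq_zero.mp h3).resolve_left hA.ne'
    simp [hy0]
  · rw [eq_comm, div_eq_div_iff h.ne' (by positivity : (A*y+B*x)/(A+B) ≠ 0)]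
    field_simp

private lemma post_interim_eq {ρ : ℝ} (hρ0 : 0 < ρ) (hρ1 : ρ < 1) {n : ℕ} (hn : 1 ≤ n)
    {m : ℕ} {pL pH : Fin m → ℝ} (hL0 : ∀ s, 0 ≤ pL s) (hH0 : ∀ s, 0 ≤ pH s)
    (hLs : ∑ s, pL s = 1) (hHs : ∑ s, pH s = 1) {σ : Fin m → ℝ} (hσ : IsStrategy σ) (s : Fin m) :
    post (interim ρ n pL pH σ) pL pH s =
      ρ * visit n pH σ * pH s /
        (ρ * visit n pH σ * pH s + (1 - ρ) * visit n pL σ * pL s) := by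
  have hA : 0 < ρ * visit n pH σ := mul_pos hρ0 (visit_pos hn hH0 hHs hσ)
  have hB : 0 < (1 - ρ) * visit n pL σ := mul_pos (by linarith) (visit_pos hn hL0 hLs hσ)
  unfold post interim
  exact aux_frac hA hB (hL0 s) (hH0 s)

private lemma exists_extreme (ρ c : ℝ) (hρ0 : 0 < ρ) (hρ1 : ρ < 1) (hc0 : 0 < c) (hc1 : c < 1)
    (n : ℕ) (hn : 1 ≤ n) (pL pH : Fin 2 → ℝ)
    (hL0 : ∀ s, 0 ≤ pL s) (hH0 : ∀ s, 0 ≤ pH s)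
    (hLs : ∑ s, pL s = 1) (hHs : ∑ s, pH s = 1)
    (hsupp : ∀ s, 0 < pL s + pH s)
    (hMLR : ∀ i j : Fin 2, i ≤ j → pH i * pL j ≤ pH j * pL i)
    (σ : Fin 2 → ℝ) (heq : IsEquilibrium ρ c n pL pH σ) (h0 : 0 < σ 0) (h1 : σ 0 < 1) :
    (∃ σ', IsEquilibrium ρ c n pL pH σ' ∧ σ' 0 = 0) ∧
    (∃ σ'', IsEquilibrium ρ c n pL pH σ'' ∧ σ'' 0 = 1) := by
  obtain ⟨hstrat, hσcond⟩ := heq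
  have hsum2L : pL 0 + pL 1 = 1 := by simpa [Fin.sum_univ_two] using hLs
  have hsum2H : pH 0 + pH 1 = 1 := by simpa [Fin.sum_univ_two] using hHs
  have hmlr01 : pH 0 * pL 1 ≤ pH 1 * pL 0 := hMLR 0 1 (by decide)
  have hP0 : post (interim ρ n pL pH σ) pL pH 0 = c := by
    rcases lt_trichotomy (post (interim ρ n pL pH σ) pL pH 0) c with h | h | h
    · exact absurd ((hσcond 0).2 h) (ne_of_gt h0)
    · exact h
    · have h' := (hσcond 0).1 h
      rw [h'] at h1; exact absurd h1 (lt_irrefl 1)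
  rcases eq_or_lt_of_le hmlr01 with heqc | hstrict
  · -- degenerate case: pL = pH, posterior is always ρ, so c = ρ
    have hab : pL 0 = pH 0 := by linear_combination -(pL 0 * hsum2H) + pH 0 * hsum2L - heqc
    have hpLH : pL = pH := by
      funext s
      fin_cases s
      · exact hab
      · show pL 1 = pH 1
        linarith
    have hpost_all : ∀ τ : Fin 2 → ℝ, IsStrategy τ → ∀ s,
        post (interim ρ n pL pH τ) pL pH s = ρ := by
      intro τ hτ s
      have hv : 0 < visit n pH τ := visit_pos hn hH0 hHs hτ
      have hvLH : visit n pL τ = visit n pH τ := by rw [hpLH]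
      have hint : interim ρ n pL pH τ = ρ := by
        unfold interim
        rw [hvLH]
        have hd : ρ * visit n pH τ + (1 - ρ) * visit n pH τ = visit n pH τ := by ring
        rw [hd, mul_div_assoc, div_self hv.ne', mul_one]
      rw [hint]
      unfold post
      have hpHs : 0 < pH s := by
        have := hsupp s
        rw [hpLH] at this; linarith
      have hd : ρ * pH s + (1 - ρ) * pL s = pH s := by rw [hpLH]; ring
      rw [hd, mul_div_assoc, div_self hpHs.ne', mul_one]
    have hcρ : c = ρ := by
      have h' := hpost_all σ hstrat 0
      rw [hP0] at h'; exact h'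
    constructor
    · refine ⟨![0, 0], ⟨fun s => by fin_cases s <;> norm_num, fun s => ?_⟩, by simp⟩
      rw [hpost_all ![0, 0] (fun s => by fin_cases s <;> norm_num) s, hcρ]
      exact ⟨fun h => absurd h (lt_irrefl ρ), fun h => absurd h (lt_irrefl ρ)⟩
    · refine ⟨![1, 1], ⟨fun s => by fin_cases s <;> norm_num, fun s => ?_⟩, by simp⟩
      rw [hpost_all ![1, 1] (fun s => by fin_cases s <;> norm_num) s, hcρ]
      exact ⟨fun h => absurd h (lt_irrefl ρ), fun h => absurd h (lt_irrefl ρ)⟩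
  · -- strict MLR case
    have h1ρ : (0:ℝ) < 1 - ρ := by linarith
    have hprod : 0 < pH 1 * pL 0 :=
      lt_of_le_of_lt (mul_nonneg (hH0 0) (hL0 1)) hstrict
    have ha : 0 < pL 0 := by nlinarith [hH0 1, hL0 0]
    have hb' : 0 < pH 1 := by nlinarith [hH0 1, hL0 0]
    have hba : pH 0 < pL 0 := by nlinarith [hstrict, hsum2L, hsum2H]
    have hb : 0 < pH 0 := by
      rcases lt_or_eq_of_le (hH0 0) with h | h
      · exact h
      · exfalso
        have hPz : post (interim ρ n pL pH σ) pL pH 0 = 0 := by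
          rw [post_interim_eq hρ0 hρ1 hn hL0 hH0 hLs hHs hstrat 0, ← h]
          simp
        rw [hP0] at hPz; linarith
    -- generic facts
    have hden : ∀ τ : Fin 2 → ℝ, IsStrategy τ →
        (0 < ρ * visit n pH τ * pH 0 + (1 - ρ) * visit n pL τ * pL 0) ∧
        (0 < ρ * visit n pH τ * pH 1 + (1 - ρ) * visit n pL τ * pL 1) := by
      intro τ hτ
      have hVH : 0 < visit n pH τ := visit_pos hn hH0 hHs hτ
      have hVL : 0 < visit n pL τ := visit_pos hn hL0 hLs hτ
      constructor
      · have t2 : 0 < (1 - ρ) * visit n pL τ * pL 0 := mul_pos (mul_pos h1ρ hVL) ha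
        have t1 : 0 ≤ ρ * visit n pH τ * pH 0 :=
          mul_nonneg (mul_nonneg hρ0.le hVH.le) (hH0 0)
        linarith
      · have t1 : 0 < ρ * visit n pH τ * pH 1 := mul_pos (mul_pos hρ0 hVH) hb'
        have t2 : 0 ≤ (1 - ρ) * visit n pL τ * pL 1 :=
          mul_nonneg (mul_nonneg h1ρ.le hVL.le) (hL0 1)
        linarith
    have hPlt : ∀ τ : Fin 2 → ℝ, IsStrategy τ →
        post (interim ρ n pL pH τ) pL pH 0 < post (interim ρ n pL pH τ) pL pH 1 := by
      intro τ hτ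
      have hVH : 0 < visit n pH τ := visit_pos hn hH0 hHs hτ
      have hVL : 0 < visit n pL τ := visit_pos hn hL0 hLs hτ
      rw [post_interim_eq hρ0 hρ1 hn hL0 hH0 hLs hHs hτ 0,
        post_interim_eq hρ0 hρ1 hn hL0 hH0 hLs hHs hτ 1]
      refine frac_lt_frac (hden τ hτ).1 (hden τ hτ).2 ?_
      nlinarith [mul_lt_mul_of_pos_left hstrict (mul_pos (mul_pos hρ0 hVH) (mul_pos h1ρ hVL))]
    have hσ1 : σ 1 = 1 := by
      apply (hσcond 1).1
      rw [← hP0]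
      exact hPlt σ hstrat
    -- explicit rejection formulas for σ
    have hrH : rej pH σ = pH 0 * (1 - σ 0) := by
      unfold rej
      rw [Fin.sum_univ_two, hσ1]
      linear_combination -hsum2H
    have hrL : rej pL σ = pL 0 * (1 - σ 0) := by
      unfold rej
      rw [Fin.sum_univ_two, hσ1]
      linear_combination -hsum2L
    have hVHσ : visit n pH σ = (1 / (n:ℝ)) * ∑ k ∈ Finset.range n, (pH 0 * (1 - σ 0)) ^ k := by
      rw [visit, hrH]
    have hVLσ : visit n pL σ = (1 / (n:ℝ)) * ∑ k ∈ Finset.range n, (pL 0 * (1 - σ 0)) ^ k := by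
      rw [visit, hrL]
    have hu0 : (0:ℝ) < 1 - σ 0 := by linarith
    have hu1 : 1 - σ 0 ≤ 1 := by linarith
    have hnR : (0:ℝ) < (n:ℝ) := by exact_mod_cast hn
    constructor
    · -- find equilibrium with σ' 0 = 0
      by_cases hcase1 : c ≤ post (interim ρ n pL pH ![0, 1]) pL pH 1
      · -- σ' = ![0,1]
        have hs01 : IsStrategy ![0, 1] := fun s => by fin_cases s <;> norm_num
        have hr01H : rej pH ![0, 1] = pH 0 := by
          unfold rej
          rw [Fin.sum_univ_two]
          simp
          linarith
        have hr01L : rej pL ![0, 1] = pL 0 := by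
          unfold rej
          rw [Fin.sum_univ_two]
          simp
          linarith
        have hmono : post (interim ρ n pL pH ![0, 1]) pL pH 0 ≤ c := by
          rw [← hP0, post_interim_eq hρ0 hρ1 hn hL0 hH0 hLs hHs hs01 0,
            post_interim_eq hρ0 hρ1 hn hL0 hH0 hLs hHs hstrat 0]
          refine frac_le_frac (hden _ hs01).1 (hden σ hstrat).1 ?_
          have hcheb := cheb n (pL 0) (pH 0) (1 - σ 0) 1 (hH0 0) hba.le hu0.le hu1
          simp only [mul_one] at hcheb
          rw [hVHσ, hVLσ, visit, visit, hr01H, hr01L]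
          nlinarith [mul_le_mul_of_nonneg_left hcheb
            (show (0:ℝ) ≤ ρ * (1 - ρ) * (1/(n:ℝ)) * (1/(n:ℝ)) * pH 0 * pL 0 by positivity)]
        refine ⟨![0, 1], ⟨hs01, fun s => ?_⟩, by simp⟩
        fin_cases s
        · exact ⟨fun h => absurd h (not_lt.mpr hmono), fun _ => by simp⟩
        · exact ⟨fun _ => by simp, fun h => absurd h (not_lt.mpr hcase1)⟩
      · by_cases hcase2 : post (interim ρ n pL pH ![0, 0]) pL pH 1 ≤ c
        · -- σ' = ![0,0]
          have hs00 : IsStrategy ![0, 0] := fun s => by fin_cases s <;> norm_num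
          have h00 : post (interim ρ n pL pH ![0, 0]) pL pH 0 < c :=
            lt_of_lt_of_le (hPlt ![0, 0] hs00) hcase2
          refine ⟨![0, 0], ⟨hs00, fun s => ?_⟩, by simp⟩
          fin_cases s
          · exact ⟨fun h => absurd h (not_lt.mpr h00.le), fun _ => by simp⟩
          · exact ⟨fun h => absurd h (not_lt.mpr hcase2), fun _ => by simp⟩
        · -- intermediate value case
          push_neg at hcase1 hcase2
          set g : ℝ → ℝ := fun u =>
            ρ * (1 / (n:ℝ) * ∑ k ∈ Finset.range n, (1 - pH 1 * u) ^ k) * pH 1 /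
              (ρ * (1 / (n:ℝ) * ∑ k ∈ Finset.range n, (1 - pH 1 * u) ^ k) * pH 1 +
                (1 - ρ) * (1 / (n:ℝ) * ∑ k ∈ Finset.range n, (1 - pL 1 * u) ^ k) * pL 1)
            with hgdef
          have hstratu : ∀ u : ℝ, 0 ≤ u → u ≤ 1 → IsStrategy ![0, u] := by
            intro u hu hu1'
            intro s; fin_cases s
            · constructor <;> norm_num
            · constructor <;> simpa
          have hgval : ∀ u : ℝ, 0 ≤ u → u ≤ 1 →
              post (interim ρ n pL pH ![0, u]) pL pH 1 = g u := by
            intro u hu hu1'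
            rw [post_interim_eq hρ0 hρ1 hn hL0 hH0 hLs hHs (hstratu u hu hu1') 1]
            have e1 : rej pH ![0, u] = 1 - pH 1 * u := by
              unfold rej; rw [Fin.sum_univ_two]; simp
            have e2 : rej pL ![0, u] = 1 - pL 1 * u := by
              unfold rej; rw [Fin.sum_univ_two]; simp
            rw [hgdef]
            simp only [visit, e1, e2]
          have hb1 : pH 1 ≤ 1 := by linarith [hH0 0]
          have ha1 : pL 1 ≤ 1 := by linarith [hL0 0]
          have hSpos : ∀ (q : ℝ), 0 ≤ q → q ≤ 1 → ∀ u ∈ Set.Icc (0:ℝ) 1,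
              0 < ∑ k ∈ Finset.range n, (1 - q * u) ^ k := by
            intro q hq hq1 u hu
            refine sum_pow_pos n hn ?_
            nlinarith [hu.1, hu.2]
          have hcont : ContinuousOn g (Set.Icc 0 1) := by
            have hsH : Continuous fun u : ℝ => ∑ k ∈ Finset.range n, (1 - pH 1 * u) ^ k :=
              continuous_finset_sum _ fun k _ => by continuity
            have hsL : Continuous fun u : ℝ => ∑ k ∈ Finset.range n, (1 - pL 1 * u) ^ k :=
              continuous_finset_sum _ fun k _ => by continuity
            have hN : Continuous fun u : ℝ =>
                ρ * (1 / (n:ℝ) * ∑ k ∈ Finset.range n, (1 - pH 1 * u) ^ k) * pH 1 :=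
              (continuous_const.mul (continuous_const.mul hsH)).mul continuous_const
            have hM : Continuous fun u : ℝ =>
                (1 - ρ) * (1 / (n:ℝ) * ∑ k ∈ Finset.range n, (1 - pL 1 * u) ^ k) * pL 1 :=
              (continuous_const.mul (continuous_const.mul hsL)).mul continuous_const
            refine ContinuousOn.div hN.continuousOn (hN.add hM).continuousOn ?_
            intro u hu
            have t1 : 0 < ρ * (1 / (n:ℝ) * ∑ k ∈ Finset.range n, (1 - pH 1 * u) ^ k) * pH 1 :=
              mul_pos (mul_pos hρ0 (mul_pos (by positivity)
                (hSpos (pH 1) (hH0 1) hb1 u hu))) hb'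
            have t2 : 0 ≤ (1 - ρ) * (1 / (n:ℝ) * ∑ k ∈ Finset.range n, (1 - pL 1 * u) ^ k) * pL 1 :=
              mul_nonneg (mul_nonneg h1ρ.le (mul_nonneg (by positivity)
                (hSpos (pL 1) (hL0 1) ha1 u hu).le)) (hL0 1)
            exact ne_of_gt (by linarith)
          have hg1 : g 1 < c := by
            rw [← hgval 1 zero_le_one le_rfl]; exact hcase1
          have hg0 : c < g 0 := by
            rw [← hgval 0 le_rfl zero_le_one]; exact hcase2
          obtain ⟨u, hu_mem, hgu⟩ :=
            intermediate_value_Icc' zero_le_one hcont ⟨hg1.le, hg0.le⟩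
          obtain ⟨hu0u, hu1u⟩ := hu_mem
          have hsu := hstratu u hu0u hu1u
          have hPu1 : post (interim ρ n pL pH ![0, u]) pL pH 1 = c := by
            rw [hgval u hu0u hu1u, hgu]
          have hPu0 : post (interim ρ n pL pH ![0, u]) pL pH 0 < c := by
            rw [← hPu1]; exact hPlt ![0, u] hsu
          refine ⟨![0, u], ⟨hsu, fun s => ?_⟩, by simp⟩
          fin_cases s
          · exact ⟨fun h => absurd h (not_lt.mpr hPu0.le), fun _ => by simp⟩
          · exact ⟨fun h => absurd h (not_lt.mpr hPu1.le),
              fun h => absurd h (not_lt.mpr hPu1.symm.le)⟩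
    · -- σ'' = ![1,1]
      have hs11 : IsStrategy ![1, 1] := fun s => by fin_cases s <;> norm_num
      have hr11H : rej pH ![1, 1] = 0 := by
        unfold rej; rw [Fin.sum_univ_two]; simp; linarith
      have hr11L : rej pL ![1, 1] = 0 := by
        unfold rej; rw [Fin.sum_univ_two]; simp; linarith
      have hge : c ≤ post (interim ρ n pL pH ![1, 1]) pL pH 0 := by
        rw [← hP0, post_interim_eq hρ0 hρ1 hn hL0 hH0 hLs hHs hstrat 0,
          post_interim_eq hρ0 hρ1 hn hL0 hH0 hLs hHs hs11 0]
        refine frac_le_frac (hden σ hstrat).1 (hden _ hs11).1 ?_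
        have hSHSL : (∑ k ∈ Finset.range n, (pH 0 * (1 - σ 0)) ^ k)
            ≤ ∑ k ∈ Finset.range n, (pL 0 * (1 - σ 0)) ^ k :=
          Finset.sum_le_sum fun k _ => pow_le_pow_left₀
            (mul_nonneg (hH0 0) hu0.le) (mul_le_mul_of_nonneg_right hba.le hu0.le) k
        rw [hVHσ, hVLσ, visit, visit, hr11H, hr11L, sum_zero_pow n hn]
        nlinarith [mul_le_mul_of_nonneg_left hSHSL
          (show (0:ℝ) ≤ ρ * (1 - ρ) * (1/(n:ℝ)) * (1/(n:ℝ)) * pH 0 * pL 0 by positivity)]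
      have hgt : c < post (interim ρ n pL pH ![1, 1]) pL pH 1 :=
        lt_of_le_of_lt hge (hPlt ![1, 1] hs11)
      refine ⟨![1, 1], ⟨hs11, fun s => ?_⟩, by simp⟩
      fin_cases s
      · exact ⟨fun _ => by simp, fun h => absurd h (not_lt.mpr hge)⟩
      · exact ⟨fun _ => by simp, fun h => absurd h (not_lt.mpr hgt.le)⟩

/-- no mixing on bad news in extremal equilibria of a binary experiment
(`0` is the low signal, `1` the high signal): the most and the least selective
equilibrium strategies accept on the low signal with probability `0` or `1`. -/
theorem no_mixing_on_bad_news
    (ρ c : ℝ) (hρ : ρ ∈ Set.Ioo (0:ℝ) 1) (hc : c ∈ Set.Ioo (0:ℝ) 1)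
    (n : ℕ) (hn : 1 ≤ n)
    (pL pH : Fin 2 → ℝ) (hE : IsExperiment pL pH) :
    (∀ σhat : Fin 2 → ℝ, MostSelective ρ c n pL pH σhat →
      σhat 0 = 0 ∨ σhat 0 = 1) ∧
    (∀ σcheck : Fin 2 → ℝ, LeastSelective ρ c n pL pH σcheck →
      σcheck 0 = 0 ∨ σcheck 0 = 1) := by
  obtain ⟨hL0, hH0, hLs, hHs, hsupp, hMLR⟩ := hE
  obtain ⟨hρ0, hρ1⟩ := hρ
  obtain ⟨hc0, hc1⟩ := hc
  constructor
  · rintro σh ⟨heq, hmin⟩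
    rcases eq_or_lt_of_le (heq.1 0).1 with h | h
    · exact Or.inl h.symm
    rcases eq_or_lt_of_le (heq.1 0).2 with h' | h'
    · exact Or.inr h'
    obtain ⟨⟨σ', heq', hσ'0⟩, -⟩ := exists_extreme ρ c hρ0 hρ1 hc0 hc1 n hn pL pH
      hL0 hH0 hLs hHs hsupp hMLR σh heq h h'
    have := hmin σ' heq' 0
    rw [hσ'0] at this
    linarith
  · rintro σch ⟨heq, hmax⟩
    rcases eq_or_lt_of_le (heq.1 0).1 with h | h
    · exact Or.inl h.symm
    rcases eq_or_lt_of_le (heq.1 0).2 with h' | h'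
    · exact Or.inr h'
    obtain ⟨-, ⟨σ'', heq'', hσ''0⟩⟩ := exists_extreme ρ c hρ0 hρ1 hc0 hc1 n hn pL pH
      hL0 hH0 hLs hHs hsupp hMLR σch heq h h'
    have := hmax σ'' heq'' 0
    rw [hσ''0] at this
    linarith
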